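/- Let ⋈ be a balanced equivalence relation on the vertex set {0,1,…,n−1} of the cyclic nearest-neighbor ring graph (edges between i and i±1 mod n), n ≥ 3, meaning that c ⋈ d implies either (c−1 ⋈ d−1 and c+1 ⋈ d+1) or (c−1 ⋈ d+1 and c+1 ⋈ d−1), all indices mod n. Then there exists a subgroup Σ of the dihedral group Dₙ acting on ℤ/nℤ such that c ⋈ d if and only if some element of Σ maps c to d. -/

import Mathlib

section aux
variable {n : ℕ} {r : ZMod n → ZMod n → Prop}

private lemma rot_prop (hequiv : Equivalence r)
    (hbal : ∀ c d : ZMod n, r c d →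
      (r (c - 1) (d - 1) ∧ r (c + 1) (d + 1)) ∨
        (r (c - 1) (d + 1) ∧ r (c + 1) (d - 1)))
    [NeZero n] (a b : ZMod n) (h0 : r a b) (h1 : r (a + 1) (b + 1)) :
    ∀ k, r k (k + (b - a)) := by
  have key : ∀ s : ℕ, r (a + s) (b + s) ∧ r (a + s + 1) (b + s + 1) := by
    intro s
    induction s with
    | zero => simpa using ⟨h0, h1⟩
    | succ m ih =>
      have hP : r (a + m) (b + m) := ih.1
      have hQ : r (a + m + 1) (b + m + 1) := ih.2
      have hstep : r (a + m + 2) (b + m + 2) := by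
        rcases hbal _ _ hQ with ⟨_, h2⟩ | ⟨h2, h3⟩
        · have e1 : a + (m:ZMod n) + 1 + 1 = a + m + 2 := by ring
          have e2 : b + (m:ZMod n) + 1 + 1 = b + m + 2 := by ring
          rwa [e1, e2] at h2
        · -- h2 : r (a+m) (b+m+2), h3 : r (a+m+2) (b+m)
          have e1 : a + (m:ZMod n) + 1 - 1 = a + m := by ring
          have e2 : b + (m:ZMod n) + 1 + 1 = b + m + 2 := by ring
          have e3 : a + (m:ZMod n) + 1 + 1 = a + m + 2 := by ring
          have e4 : b + (m:ZMod n) + 1 - 1 = b + m := by ring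
          rw [e1, e2] at h2; rw [e3, e4] at h3
          exact hequiv.trans h3 (hequiv.trans (hequiv.symm hP) h2)
      constructor
      · push_cast
        have e1 : a + ((m:ZMod n) + 1) = a + m + 1 := by ring
        have e2 : b + ((m:ZMod n) + 1) = b + m + 1 := by ring
        rw [e1, e2]; exact hQ
      · push_cast
        have e1 : a + ((m:ZMod n) + 1) + 1 = a + m + 2 := by ring
        have e2 : b + ((m:ZMod n) + 1) + 1 = b + m + 2 := by ring
        rw [e1, e2]; exact hstep
  intro k
  obtain ⟨s, hs⟩ := ZMod.natCast_zmod_surjective (n := n) (k - a)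
  have hk : k = a + s := by rw [hs]; ring
  have := (key s).1
  have e : b + (s : ZMod n) = k + (b - a) := by rw [hk]; ring
  rwa [← hk, e] at this

private lemma refl_prop (hequiv : Equivalence r)
    (hbal : ∀ c d : ZMod n, r c d →
      (r (c - 1) (d - 1) ∧ r (c + 1) (d + 1)) ∨
        (r (c - 1) (d + 1) ∧ r (c + 1) (d - 1)))
    [NeZero n] (a b : ZMod n) (h0 : r a b) (h1 : r (a + 1) (b - 1)) :
    ∀ k, r k ((a + b) - k) := by
  have key : ∀ s : ℕ, r (a + s) (b - s) ∧ r (a + s + 1) (b - s - 1) := by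
    intro s
    induction s with
    | zero => simpa using ⟨h0, h1⟩
    | succ m ih =>
      have hP : r (a + m) (b - m) := ih.1
      have hQ : r (a + m + 1) (b - m - 1) := ih.2
      have hstep : r (a + m + 2) (b - m - 2) := by
        rcases hbal _ _ hQ with ⟨h2, h3⟩ | ⟨_, h2⟩
        · -- h2 : r (a+m) (b-m-2), h3 : r (a+m+2) (b-m)
          have e1 : a + (m:ZMod n) + 1 - 1 = a + m := by ring
          have e2 : b - (m:ZMod n) - 1 - 1 = b - m - 2 := by ring
          have e3 : a + (m:ZMod n) + 1 + 1 = a + m + 2 := by ring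
          have e4 : b - (m:ZMod n) - 1 + 1 = b - m := by ring
          rw [e1, e2] at h2; rw [e3, e4] at h3
          exact hequiv.trans h3 (hequiv.trans (hequiv.symm hP) h2)
        · have e3 : a + (m:ZMod n) + 1 + 1 = a + m + 2 := by ring
          have e2 : b - (m:ZMod n) - 1 - 1 = b - m - 2 := by ring
          rwa [e3, e2] at h2
      constructor
      · push_cast
        have e1 : a + ((m:ZMod n) + 1) = a + m + 1 := by ring
        have e2 : b - ((m:ZMod n) + 1) = b - m - 1 := by ring
        rw [e1, e2]; exact hQ
      · push_cast
        have e1 : a + ((m:ZMod n) + 1) + 1 = a + m + 2 := by ring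
        have e2 : b - ((m:ZMod n) + 1) - 1 = b - m - 2 := by ring
        rw [e1, e2]; exact hstep
  intro k
  obtain ⟨s, hs⟩ := ZMod.natCast_zmod_surjective (n := n) (k - a)
  have hk : k = a + s := by rw [hs]; ring
  have := (key s).1
  have e : b - (s : ZMod n) = (a + b) - k := by rw [hk]; ring
  rwa [← hk, e] at this

end aux

theorem stmt_15 (n : ℕ) (hn : 3 ≤ n) (r : ZMod n → ZMod n → Prop)
    (hequiv : Equivalence r)
    (hbal : ∀ c d : ZMod n, r c d →
      (r (c - 1) (d - 1) ∧ r (c + 1) (d + 1)) ∨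
        (r (c - 1) (d + 1) ∧ r (c + 1) (d - 1))) :
    ∃ S : Subgroup (Equiv.Perm (ZMod n)),
      (∀ σ ∈ S, (∃ a : ZMod n, ∀ k, σ k = k + a) ∨ (∃ s : ZMod n, ∀ k, σ k = s - k)) ∧
      (∀ c d : ZMod n, r c d ↔ ∃ σ ∈ S, σ c = d) := by
  haveI : NeZero n := ⟨by omega⟩
  classical
  set D : Set (Equiv.Perm (ZMod n)) := {σ : Equiv.Perm (ZMod n) |
        ((∃ a : ZMod n, ∀ k, σ k = k + a) ∨ (∃ s : ZMod n, ∀ k, σ k = s - k)) ∧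
        ∀ k, r k (σ k)} with hD
  have hone : (1 : Equiv.Perm (ZMod n)) ∈ D :=
    ⟨Or.inl ⟨0, fun k => by simp⟩, fun k => hequiv.refl k⟩
  have hmulD : ∀ σ τ : Equiv.Perm (ZMod n), σ ∈ D → τ ∈ D → σ * τ ∈ D := by
    rintro σ τ ⟨hσd, hσr⟩ ⟨hτd, hτr⟩
    refine ⟨?_, fun k => hequiv.trans (hτr k) (hσr (τ k))⟩
    have hmul : ∀ k, (σ * τ) k = σ (τ k) := fun k => rfl
    rcases hσd with ⟨a, ha⟩ | ⟨s, hs⟩ <;> rcases hτd with ⟨b, hb⟩ | ⟨t, ht⟩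
    · exact Or.inl ⟨b + a, fun k => by rw [hmul, hb, ha]; ring⟩
    · exact Or.inr ⟨t + a, fun k => by rw [hmul, ht, ha]; ring⟩
    · exact Or.inr ⟨s - b, fun k => by rw [hmul, hb, hs]; ring⟩
    · exact Or.inl ⟨s - t, fun k => by rw [hmul, ht, hs]; ring⟩
  have hinvD : ∀ σ : Equiv.Perm (ZMod n), σ ∈ D → σ⁻¹ ∈ D := by
    rintro σ ⟨hσd, hσr⟩
    constructor
    · rcases hσd with ⟨a, ha⟩ | ⟨s, hs⟩
      · refine Or.inl ⟨-a, fun k => σ.injective ?_⟩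
        rw [show σ (σ⁻¹ k) = k from σ.apply_symm_apply k, ha]; ring
      · refine Or.inr ⟨s, fun k => σ.injective ?_⟩
        rw [show σ (σ⁻¹ k) = k from σ.apply_symm_apply k, hs]; ring
    · intro k
      have := hσr (σ⁻¹ k)
      rw [show σ (σ⁻¹ k) = k from σ.apply_symm_apply k] at this
      exact hequiv.symm this
  refine ⟨⟨⟨⟨D, fun {a b} ha hb => hmulD a b ha hb⟩, hone⟩,
      fun {a} ha => hinvD a ha⟩, ?_, ?_⟩
  · exact fun σ h => h.1
  · intro c d
    constructor
    · intro h
      rcases hbal c d h with ⟨_, h1⟩ | ⟨_, h1⟩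
      · have hall := rot_prop hequiv hbal c d h h1
        refine ⟨Equiv.addRight (d - c), ⟨Or.inl ⟨d - c, fun k => rfl⟩, hall⟩, ?_⟩
        show c + (d - c) = d; ring
      · have hall := refl_prop hequiv hbal c d h h1
        refine ⟨Equiv.subLeft (c + d), ⟨Or.inr ⟨c + d, fun k => rfl⟩, ?_⟩, ?_⟩
        · intro k; simpa using hall k
        · show (c + d) - c = d; ring
    · rintro ⟨σ, hσ, hc⟩
      have := hσ.2 c
      rwa [hc] at this
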